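/- Let L, R, D be nonnegative reals with L + R + D > 0, and let s be a complex number with Re s > 0. Then L s² + R s + D ≠ 0 and the admittance ρ = s / (L s² + R s + D) satisfies Re ρ > 0. -/

import Mathlib

open Complex

theorem admittance_well_defined_re_pos (L R D : ℝ) (hL : 0 ≤ L) (hR : 0 ≤ R) (hD : 0 ≤ D)
    (hsum : 0 < L + R + D) (s : ℂ) (hs : 0 < s.re) :
    (L : ℂ) * s ^ 2 + (R : ℂ) * s + (D : ℂ) ≠ 0 ∧
      0 < (s / ((L : ℂ) * s ^ 2 + (R : ℂ) * s + (D : ℂ))).re := by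
  set q : ℂ := (L : ℂ) * s ^ 2 + (R : ℂ) * s + (D : ℂ) with hq
  set a := s.re with ha
  set b := s.im with hb
  have hqre : q.re = L * (a * a - b * b) + R * a + D := by
    rw [hq]
    simp only [Complex.add_re, Complex.mul_re, Complex.ofReal_re, Complex.ofReal_im,
      pow_two, Complex.mul_im]
    ring
  have hqim : q.im = L * (2 * a * b) + R * b := by
    rw [hq]
    simp only [Complex.add_im, Complex.mul_im, Complex.ofReal_re, Complex.ofReal_im,
      pow_two, Complex.mul_re]
    ring
  have hN : 0 < a * q.re + b * q.im := by
    rw [hqre, hqim]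
    have h1 : 0 < a * a + b * b := by nlinarith [sq_nonneg b]
    nlinarith [mul_nonneg hL h1.le, mul_nonneg hR h1.le,
      mul_pos hs h1, mul_nonneg (mul_nonneg hL hs.le) h1.le,
      mul_pos (mul_pos hs hs) hs]
  have hqne : q ≠ 0 := by
    intro h
    rw [h] at hN
    simp at hN
  refine ⟨hqne, ?_⟩
  rw [Complex.div_re, ← add_div]
  have hnsq : 0 < Complex.normSq q := Complex.normSq_pos.mpr hqne
  exact div_pos hN hnsq
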